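/- arXiv:1306.2060 — 2 statements merged into one kernel-verified Lean document; each statement's English description precedes it below -/
import Mathlib

section
/- In the currency with denominations {25, 18, 5, 1}, the sum over n from 0 to 99 of the minimum number of parts in a partition of n into these denominations equals 389. -/
/-- `s` is a partition of `n` into parts from the set `D`. -/
def IsPartition (D : Set ℕ) (n : ℕ) (s : Multiset ℕ) : Prop :=
  (∀ x ∈ s, x ∈ D) ∧ s.sum = n

/-- The minimum number of parts in a partition of `n` into parts from {25, 18, 5, 1}. -/
noncomputable def mShallit (n : ℕ) : ℕ :=
  sInf {k | ∃ s : Multiset ℕ, IsPartition {25, 18, 5, 1} n s ∧ s.card = k}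

def gL : List ℕ :=
  [0, 1, 2, 3, 4, 1, 2, 3, 4, 5, 2, 3, 4, 5, 6, 3, 4, 5, 1, 2, 3, 4, 5, 2, 3,
   1, 2, 3, 3, 4, 2, 3, 4, 4, 5, 3, 2, 3, 4, 5, 4, 3, 4, 2, 3, 4, 4, 5, 3, 4,
   2, 3, 4, 4, 3, 3, 4, 5, 5, 4, 4, 3, 4, 5, 5, 5, 4, 5, 3, 4, 5, 5, 4, 4, 5,
   3, 4, 5, 5, 4, 4, 5, 6, 6, 5, 5, 4, 5, 6, 6, 5, 5, 6, 4, 5, 6, 6, 5, 5, 6]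

def g (n : ℕ) : ℕ := gL.getD n 0

lemma g_rec : ∀ n < 100, ∀ c ∈ [25, 18, 5, 1], c ≤ n → g n ≤ g (n - c) + 1 := by
  decide

lemma g_step : ∀ n < 100, 0 < n →
    (1 ≤ n ∧ g n = g (n - 1) + 1) ∨ (5 ≤ n ∧ g n = g (n - 5) + 1) ∨
    (18 ≤ n ∧ g n = g (n - 18) + 1) ∨ (25 ≤ n ∧ g n = g (n - 25) + 1) := by
  decide

lemma exists_part : ∀ n < 100, ∃ s, IsPartition {25, 18, 5, 1} n s ∧ s.card = g n := by
  intro n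
  induction n using Nat.strong_induction_on with
  | _ n ih =>
    intro hn
    rcases Nat.eq_zero_or_pos n with h0 | h0
    · subst h0
      exact ⟨0, ⟨by simp, by simp⟩, by decide⟩
    · have hst := g_step n hn h0
      have key : ∀ c : ℕ, c ∈ ({25, 18, 5, 1} : Set ℕ) → c ≤ n → 0 < c →
          g n = g (n - c) + 1 →
          ∃ s, IsPartition {25, 18, 5, 1} n s ∧ s.card = g n := by
        intro c hcD hcn hcpos heq
        obtain ⟨s', ⟨hsD, hsum⟩, hcard⟩ := ih (n - c) (by omega) (by omega)
        refine ⟨c ::ₘ s', ⟨?_, ?_⟩, ?_⟩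
        · intro x hx
          rcases Multiset.mem_cons.mp hx with h | h
          · subst h; exact hcD
          · exact hsD x h
        · simp [hsum]; omega
        · simp [hcard, heq]
      rcases hst with ⟨hc, heq⟩ | ⟨hc, heq⟩ | ⟨hc, heq⟩ | ⟨hc, heq⟩
      · exact key 1 (by simp) hc (by norm_num) heq
      · exact key 5 (by simp) hc (by norm_num) heq
      · exact key 18 (by simp) hc (by norm_num) heq
      · exact key 25 (by simp) hc (by norm_num) heq

lemma lower : ∀ n < 100, ∀ s, IsPartition {25, 18, 5, 1} n s → g n ≤ s.card := by
  intro n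
  induction n using Nat.strong_induction_on with
  | _ n ih =>
    intro hn s ⟨hsD, hsum⟩
    rcases Multiset.empty_or_exists_mem s with h0 | ⟨x, hx⟩
    · subst h0
      simp at hsum
      subst hsum
      decide
    · have hxD : x ∈ ({25, 18, 5, 1} : Set ℕ) := hsD x hx
      have hxval : x = 25 ∨ x = 18 ∨ x = 5 ∨ x = 1 := by
        simpa [Set.mem_insert_iff] using hxD
      have hxpos : 0 < x := by rcases hxval with h|h|h|h <;> omega
      have hxle : x ≤ n := by
        rw [← hsum]
        exact Multiset.single_le_sum (fun y _ => Nat.zero_le y) x hx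
      obtain ⟨t, rfl⟩ := Multiset.exists_cons_of_mem hx
      have hsum' : t.sum = n - x := by
        simp at hsum; omega
      have htD : ∀ y ∈ t, y ∈ ({25, 18, 5, 1} : Set ℕ) := fun y hy =>
        hsD y (Multiset.mem_cons_of_mem hy)
      have hle : g (n - x) ≤ t.card := ih (n - x) (by omega) (by omega) t ⟨htD, hsum'⟩
      have hrec : g n ≤ g (n - x) + 1 := by
        apply g_rec n hn x _ hxle
        rcases hxval with h|h|h|h <;> simp [h]
      simp only [Multiset.card_cons]
      omega

lemma mShallit_eq : ∀ n < 100, mShallit n = g n := by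
  intro n hn
  have hne : {k | ∃ s : Multiset ℕ, IsPartition {25, 18, 5, 1} n s ∧ s.card = k}.Nonempty := by
    refine ⟨n, Multiset.replicate n 1, ⟨?_, ?_⟩, ?_⟩
    · intro x hx
      rw [Multiset.eq_of_mem_replicate hx]
      simp
    · simp
    · simp
  apply le_antisymm
  · obtain ⟨s, hs, hcard⟩ := exists_part n hn
    exact Nat.sInf_le ⟨s, hs, hcard⟩
  · obtain ⟨s, hs, hcard⟩ := Nat.sInf_mem hne
    rw [mShallit, ← hcard]
    exact lower n hn s hs

set_option maxRecDepth 4000 in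
/-- The sum over 0 ≤ n ≤ 99 of the minimum number of coins in the Shallit currency
is 389. -/
theorem sum_min_coins_shallit :
    (∑ n ∈ Finset.range 100, mShallit n) = 389 := by
  rw [Finset.sum_congr rfl fun n hn => mShallit_eq n (Finset.mem_range.mp hn)]
  decide
end

section
/- If a finite-state Markov chain on wallet states has stationary distribution p such that the induced distribution of the wallet's total value is uniform on {0, 1, ..., 99}, then the expected number of coins under p is at least 47/10. -/
/-- Greedy coin count for value `n` with coins 25, 10, 5, 1. -/
def greedyCount (n : ℕ) : ℕ :=
  n / 25 + n % 25 / 10 + n % 25 % 10 / 5 + n % 25 % 10 % 5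

lemma greedy_step : ∀ n < 100, ∀ c ∈ ({25, 10, 5, 1} : Finset ℕ), c ≤ n →
    greedyCount n ≤ greedyCount (n - c) + 1 := by decide

lemma greedy_le_card (m : Multiset ℕ) (hm : ∀ x ∈ m, x ∈ ({25, 10, 5, 1} : Set ℕ))
    (hs : m.sum ≤ 99) : greedyCount m.sum ≤ Multiset.card m := by
  induction m using Multiset.induction_on with
  | empty => simp [greedyCount]
  | cons a m ih =>
    have ha : a ∈ ({25, 10, 5, 1} : Set ℕ) := hm a (Multiset.mem_cons_self a m)
    have hsum : (a ::ₘ m).sum = a + m.sum := Multiset.sum_cons a m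
    have hle : a + m.sum ≤ 99 := by rw [← hsum]; exact hs
    have hmsum : m.sum ≤ 99 := le_trans (Nat.le_add_left _ _) hle
    have ha' : a ∈ ({25, 10, 5, 1} : Finset ℕ) := by
      simp only [Set.mem_insert_iff, Set.mem_singleton_iff] at ha
      simp [Finset.mem_insert]; tauto
    have hstep := greedy_step (a + m.sum) (lt_of_le_of_lt hle (by norm_num)) a ha'
      (Nat.le_add_right a m.sum)
    have : greedyCount (a + m.sum) ≤ greedyCount m.sum + 1 := by
      simpa [Nat.add_sub_cancel_left] using hstep
    rw [hsum, Multiset.card_cons]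
    exact le_trans this (Nat.add_le_add_right (ih (fun x hx => hm x (Multiset.mem_cons_of_mem hx)) hmsum) 1)

lemma greedy_total : ∑ n ∈ Finset.range 100, greedyCount n = 470 := by decide

/-- If a finite-state chain on wallet states (multisets of coins from {25,10,5,1}
with value at most 99) has a distribution p inducing the uniform distribution on
wallet values in {0, ..., 99}, then the expected number of coins is at least 47/10. -/
theorem expected_coins_lower_bound {ι : Type*} [Fintype ι]
    (s : ι → Multiset ℕ) (p : ι → ℚ)
    (hparts : ∀ i, ∀ x ∈ s i, x ∈ ({25, 10, 5, 1} : Set ℕ))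
    (hval : ∀ i, (s i).sum ≤ 99)
    (hp : ∀ i, 0 ≤ p i)
    (hunif : ∀ n ∈ Finset.range 100,
      (∑ i ∈ Finset.univ.filter (fun i => (s i).sum = n), p i) = 1 / 100) :
    47 / 10 ≤ ∑ i : ι, p i * (s i).card := by
  have key : (47 / 10 : ℚ) = ∑ n ∈ Finset.range 100, (greedyCount n : ℚ) * (1 / 100) := by
    rw [← Finset.sum_mul]
    have : (∑ n ∈ Finset.range 100, (greedyCount n : ℚ)) = 470 := by
      rw [← Nat.cast_sum, greedy_total]; norm_num
    rw [this]; norm_num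
  have step1 : ∑ n ∈ Finset.range 100, (greedyCount n : ℚ) * (1 / 100)
      = ∑ i : ι, p i * (greedyCount (s i).sum : ℚ) := by
    have hmaps : ∀ i ∈ (Finset.univ : Finset ι), (s i).sum ∈ Finset.range 100 :=
      fun i _ => Finset.mem_range.mpr (by have := hval i; omega)
    rw [← Finset.sum_fiberwise_of_maps_to hmaps (fun i => p i * (greedyCount (s i).sum : ℚ))]
    refine Finset.sum_congr rfl fun n hn => ?_
    have : ∑ i ∈ Finset.univ.filter (fun i => (s i).sum = n), p i * (greedyCount (s i).sum : ℚ)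
        = ∑ i ∈ Finset.univ.filter (fun i => (s i).sum = n), p i * (greedyCount n : ℚ) := by
      refine Finset.sum_congr rfl fun i hi => ?_
      rw [(Finset.mem_filter.mp hi).2]
    rw [this, ← Finset.sum_mul, hunif n hn, mul_comm]
  rw [key, step1]
  refine Finset.sum_le_sum fun i _ => ?_
  exact mul_le_mul_of_nonneg_left (by exact_mod_cast greedy_le_card (s i) (hparts i) (hval i)) (hp i)
end
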